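/- Let η > 0, b ∈ ℝ, and φ(t) = (e^t - 1 - t)/t² for t ≠ 0 with φ(0) = 1/2. For any real random variable W with W ≤ b almost surely and E[W²] < ∞, E[exp(η(W - E[W] - η φ(ηb) E[W²]))] ≤ 1. -/

import Mathlib

open MeasureTheory Real intervalIntegral

noncomputable def gAux (t : ℝ) : ℝ := ∫ s in (0:ℝ)..1, (1 - s) * Real.exp (t * s)

lemma gAux_eval (t : ℝ) : t ^ 2 * gAux t = Real.exp t - 1 - t := by
  rcases eq_or_ne t 0 with rfl | ht
  · simp
  · have h : ∀ s ∈ Set.uIcc (0:ℝ) 1, HasDerivAt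
        (fun s : ℝ => (1 - s) * Real.exp (t * s) / t + Real.exp (t * s) / t ^ 2)
        ((1 - s) * Real.exp (t * s)) s := by
      intro s _
      have h1 : HasDerivAt (fun s : ℝ => Real.exp (t * s)) (Real.exp (t * s) * t) s := by
        simpa [mul_comm, Function.comp_def] using (Real.hasDerivAt_exp (t * s)).comp s
          ((hasDerivAt_id s).const_mul t)
      have h2 : HasDerivAt (fun s : ℝ => (1 - s)) (-1 : ℝ) s := by
        simpa using ((hasDerivAt_id s).const_sub 1)
      have := ((h2.mul h1).div_const t).add (h1.div_const (t ^ 2))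
      refine this.congr_deriv ?_
      field_simp
      ring
    have hcont : ContinuousOn (fun s : ℝ => (1 - s) * Real.exp (t * s)) (Set.uIcc 0 1) := by
      fun_prop
    have := intervalIntegral.integral_eq_sub_of_hasDerivAt h hcont.intervalIntegrable
    rw [gAux, this]
    field_simp
    simp only [mul_zero, Real.exp_zero]; ring

lemma gAux_zero : gAux 0 = 1 / 2 := by
  have h : ∀ s ∈ Set.uIcc (0:ℝ) 1, HasDerivAt
      (fun s : ℝ => s - s ^ 2 / 2) ((1 - s) * Real.exp (0 * s)) s := by
    intro s _
    simpa [sub_mul, Function.comp_def, Pi.sub_def] using ((hasDerivAt_id s).sub (((hasDerivAt_pow 2 s)).div_const 2))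
  have hcont : ContinuousOn (fun s : ℝ => (1 - s) * Real.exp (0 * s)) (Set.uIcc 0 1) := by
    fun_prop
  have := intervalIntegral.integral_eq_sub_of_hasDerivAt h hcont.intervalIntegrable
  rw [gAux, this]; norm_num

lemma gAux_mono {x y : ℝ} (hxy : x ≤ y) : gAux x ≤ gAux y := by
  apply intervalIntegral.integral_mono_on zero_le_one
  · exact (Continuous.continuousOn (by fun_prop)).intervalIntegrable
  · exact (Continuous.continuousOn (by fun_prop)).intervalIntegrable
  · intro s hs
    have h1 : (0:ℝ) ≤ 1 - s := by linarith [hs.2]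
    have : x * s ≤ y * s := mul_le_mul_of_nonneg_right hxy hs.1
    exact mul_le_mul_of_nonneg_left (Real.exp_le_exp.2 this) h1

lemma exp_le_aux {x y : ℝ} (hxy : x ≤ y) :
    Real.exp x ≤ 1 + x + x ^ 2 * gAux y := by
  have h1 : x ^ 2 * gAux x ≤ x ^ 2 * gAux y :=
    mul_le_mul_of_nonneg_left (gAux_mono hxy) (sq_nonneg x)
  have := gAux_eval x
  linarith

/-- Bernstein-type exponential moment inequality: let `η > 0`, `b ∈ ℝ`, and
`φ(t) = (e^t - 1 - t)/t²` for `t ≠ 0` with `φ(0) = 1/2`. For any real random variable `W`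
with `W ≤ b` a.s. and `E[W²] < ∞`, `E[exp(η(W - E W - η φ(ηb) E[W²]))] ≤ 1`. -/
theorem bernstein_exp_moment {Ω : Type*} [MeasurableSpace Ω]
    (μ : Measure Ω) [IsProbabilityMeasure μ] (W : Ω → ℝ) (hWmeas : Measurable W)
    (b : ℝ) (hWb : ∀ᵐ ω ∂μ, W ω ≤ b)
    (hW1 : Integrable W μ) (hW2 : Integrable (fun ω => (W ω) ^ 2) μ)
    (η : ℝ) (hη : 0 < η)
    (φ : ℝ → ℝ)
    (hφ : ∀ t : ℝ, φ t = if t = 0 then 1 / 2 else (Real.exp t - 1 - t) / t ^ 2) :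
    ∫ ω, Real.exp (η * (W ω - (∫ ω', W ω' ∂μ)
        - η * φ (η * b) * (∫ ω', (W ω') ^ 2 ∂μ))) ∂μ ≤ 1 := by
  have hφg : φ (η * b) = gAux (η * b) := by
    rw [hφ]
    rcases eq_or_ne (η * b) 0 with h0 | h0
    · rw [if_pos h0, h0, gAux_zero]
    · rw [if_neg h0, ← gAux_eval (η * b)]
      field_simp
      exact mul_div_cancel_left₀ _ (right_ne_zero_of_mul h0)
  set m := ∫ ω', W ω' ∂μ with hm
  set v := ∫ ω', (W ω') ^ 2 ∂μ with hv
  set G := gAux (η * b) with hG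
  -- pointwise bound
  have hbound : ∀ᵐ ω ∂μ, Real.exp (η * W ω) ≤ 1 + η * W ω + η ^ 2 * G * (W ω) ^ 2 := by
    filter_upwards [hWb] with ω hω
    have : η * W ω ≤ η * b := mul_le_mul_of_nonneg_left hω hη.le
    have := exp_le_aux this
    calc Real.exp (η * W ω) ≤ 1 + η * W ω + (η * W ω) ^ 2 * G := this
      _ = 1 + η * W ω + η ^ 2 * G * (W ω) ^ 2 := by ring
  -- integrability of the bound
  have hBint : Integrable (fun ω => 1 + η * W ω + η ^ 2 * G * (W ω) ^ 2) μ := by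
    exact ((integrable_const 1).add (hW1.const_mul η)).add (hW2.const_mul _)
  have hExpInt : Integrable (fun ω => Real.exp (η * W ω)) μ := by
    refine hBint.mono' ?_ ?_
    · exact ((hWmeas.const_mul η).exp).aestronglyMeasurable
    · filter_upwards [hbound] with ω hω
      rwa [Real.norm_eq_abs, abs_of_pos (Real.exp_pos _)]
  -- integral bound
  have hInt : ∫ ω, Real.exp (η * W ω) ∂μ ≤ 1 + η * m + η ^ 2 * G * v := by
    have := integral_mono_ae hExpInt hBint hbound
    calc ∫ ω, Real.exp (η * W ω) ∂μ
        ≤ ∫ ω, (1 + η * W ω + η ^ 2 * G * (W ω) ^ 2) ∂μ := this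
      _ = 1 + η * m + η ^ 2 * G * v := by
          have h1 := integral_add ((integrable_const (1:ℝ)).add (hW1.const_mul η))
            (hW2.const_mul (η ^ 2 * G) (f := fun ω => (W ω) ^ 2))
          have h2 := integral_add (μ := μ) (integrable_const (1:ℝ)) (hW1.const_mul η)
          simp only [Pi.add_apply] at h1 h2
          rw [h1, h2, MeasureTheory.integral_const, MeasureTheory.integral_const_mul, MeasureTheory.integral_const_mul]
          simp [hm, hv]
  have hexp : 1 + η * m + η ^ 2 * G * v ≤ Real.exp (η * m + η ^ 2 * G * v) := by
    have := Real.add_one_le_exp (η * m + η ^ 2 * G * v)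
    linarith
  -- rewrite LHS
  have hrw : (fun ω => Real.exp (η * (W ω - m - η * φ (η * b) * v)))
      = fun ω => Real.exp (η * W ω) * Real.exp (-(η * m) - η ^ 2 * G * v) := by
    funext ω
    rw [← Real.exp_add, hφg]
    ring_nf
  rw [hrw, MeasureTheory.integral_mul_const]
  calc (∫ ω, Real.exp (η * W ω) ∂μ) * Real.exp (-(η * m) - η ^ 2 * G * v)
      ≤ Real.exp (η * m + η ^ 2 * G * v) * Real.exp (-(η * m) - η ^ 2 * G * v) :=
        mul_le_mul_of_nonneg_right (hInt.trans hexp) (Real.exp_pos _).le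
    _ = 1 := by rw [← Real.exp_add]; ring_nf; exact Real.exp_zero
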